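/- Fix a, b > 0, ε > 0, r₂ > r₁ > 0 and c₁, c₂ > 0. There exist constants c₃ > 0 and c > 0, depending only on r₁, r₂, c₁, c₂, a, b, ε, such that for every n, every matrix A satisfying condition (A), every H satisfying conditions (H1)–(H2), and every region Ω with U_n(r₁n^ε) ⊆ Ω ⊆ U_n(r₂n^ε): (i) ⟨1⟩_Ω = (1 + δ)·⟨1⟩ with |δ| ≤ c·exp(−c₃·n^{2ε}), and (ii) |⟨1⟩_{F,Ω}| ≤ c·⟨1⟩. -/

import Mathlib

open MeasureTheory Matrix Finset

/-- The ℓ^p norm on `Fin n → ℝ` (with `p = ⊤` the maximum norm). -/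
noncomputable def lpnorm {n : ℕ} (p : ENNReal) (x : Fin n → ℝ) : ℝ :=
  if p = ⊤ then ⨆ j, |x j| else (∑ j, |x j| ^ p.toReal) ^ (1 / p.toReal)

/-- The operator norm induced by the ℓ^p vector norm. -/
noncomputable def opNorm {n : ℕ} (p : ENNReal) (A : Matrix (Fin n) (Fin n) ℝ) : ℝ :=
  sSup {c : ℝ | ∃ x : Fin n → ℝ, x ≠ 0 ∧ c = lpnorm p (A.mulVec x) / lpnorm p x}

/-- Condition (A): `A = I + X` is symmetric positive definite, `X` has zero diagonal,
`|X_{jk}| ≤ a/n` for all `j,k`, and `‖A⁻¹‖₂ ≤ b`. -/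
def CondA {n : ℕ} (a b : ℝ) (A : Matrix (Fin n) (Fin n) ℝ) : Prop :=
  A.IsSymm ∧ A.PosDef ∧ (∀ j, A j j = 1) ∧
    (∀ j k, j ≠ k → |A j k| ≤ a / n) ∧ opNorm 2 A⁻¹ ≤ b

/-- The cube `U_n(ρ) = {θ ∈ ℝⁿ : |θ_j| ≤ ρ for all j}`. -/
def Uset (n : ℕ) (ρ : ℝ) : Set (Fin n → ℝ) := {θ | ∀ j, |θ j| ≤ ρ}

/-- Conditions (H1)–(H2): `H` is C¹ with `H(θ) ≤ c₁ θᵀAθ/n` and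
`‖∇H(θ)‖_∞ ≤ c₂ (‖θ‖_∞³ + ‖θ‖_∞)/n`.  (The norm `‖θ‖` on `Fin n → ℝ` is the sup norm.) -/
def CondH {n : ℕ} (c₁ c₂ : ℝ) (A : Matrix (Fin n) (Fin n) ℝ) (H : (Fin n → ℝ) → ℝ) : Prop :=
  ContDiff ℝ 1 H ∧
    (∀ θ, H θ ≤ c₁ * (θ ⬝ᵥ A.mulVec θ) / n) ∧
    (∀ θ (j : Fin n), |fderiv ℝ H θ (Pi.single j 1)| ≤ c₂ * (‖θ‖ ^ 3 + ‖θ‖) / n)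

namespace RegionAux
open Real


variable {n : ℕ}

lemma continuous_quad (A : Matrix (Fin n) (Fin n) ℝ) :
    Continuous fun θ : Fin n → ℝ => θ ⬝ᵥ A.mulVec θ := by
  simp only [dotProduct, Matrix.mulVec]
  fun_prop

lemma continuous_dot (c : Fin n → ℝ) :
    Continuous fun θ : Fin n → ℝ => c ⬝ᵥ θ := by
  simp only [dotProduct]
  fun_prop

lemma quad_smul (A : Matrix (Fin n) (Fin n) ℝ) (c : ℝ) (θ : Fin n → ℝ) :
    (c • θ) ⬝ᵥ A.mulVec (c • θ) = c ^ 2 * (θ ⬝ᵥ A.mulVec θ) := by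
  rw [Matrix.mulVec_smul, dotProduct_smul, smul_dotProduct]
  simp [smul_eq_mul]; ring

lemma posdef_lower {A : Matrix (Fin n) (Fin n) ℝ} (hA : A.PosDef) :
    ∃ m : ℝ, 0 < m ∧ ∀ θ : Fin n → ℝ, m * ∑ j, θ j ^ 2 ≤ θ ⬝ᵥ A.mulVec θ := by
  rcases Nat.eq_zero_or_pos n with hn | hn
  · refine ⟨1, one_pos, fun θ => ?_⟩
    subst hn
    simp [dotProduct]
  · set S : Set (Fin n → ℝ) := {θ | ∑ j, θ j ^ 2 = 1} with hS
    have hcont : Continuous fun θ : Fin n → ℝ => ∑ j, θ j ^ 2 := by fun_prop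
    have hclosed : IsClosed S := isClosed_eq hcont continuous_const
    have hbdd : Bornology.IsBounded S := by
      refine (Metric.isBounded_iff_subset_closedBall 0).2 ⟨1, fun θ hθ => ?_⟩
      have h1 : ∀ j, |θ j| ≤ 1 := by
        intro j
        have h2 : θ j ^ 2 ≤ 1 := by
          have h3 := Finset.single_le_sum (f := fun j => θ j ^ 2)
            (fun i _ => sq_nonneg _) (Finset.mem_univ j)
          have h4 : ∑ i, θ i ^ 2 = 1 := hθ
          simpa [h4] using h3
        nlinarith [abs_nonneg (θ j), sq_abs (θ j)]
      rw [Metric.mem_closedBall, dist_zero_right]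
      exact (pi_norm_le_iff_of_nonneg zero_le_one).2 fun j => by
        simpa [Real.norm_eq_abs] using h1 j
    have hcompact : IsCompact S := Metric.isCompact_of_isClosed_isBounded hclosed hbdd
    have hne : S.Nonempty := by
      refine ⟨Pi.single ⟨0, hn⟩ 1, ?_⟩
      simp [hS, Pi.single_apply, Finset.sum_ite_eq']
    obtain ⟨θ₀, hθ₀S, hmin⟩ := hcompact.exists_isMinOn hne (continuous_quad A).continuousOn
    have hθ₀ne : θ₀ ≠ 0 := by
      intro h
      rw [h] at hθ₀S
      simp [hS] at hθ₀S
    have hm : 0 < θ₀ ⬝ᵥ A.mulVec θ₀ := by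
      have := hA.re_dotProduct_pos hθ₀ne
      simpa using this
    refine ⟨θ₀ ⬝ᵥ A.mulVec θ₀, hm, fun θ => ?_⟩
    rcases eq_or_ne (∑ j, θ j ^ 2) 0 with h0 | h0
    · have : θ = 0 := by
        funext j
        have := (Finset.sum_eq_zero_iff_of_nonneg (fun i _ => sq_nonneg (θ i))).1 h0 j
          (Finset.mem_univ j)
        exact pow_eq_zero_iff (n := 2) (by norm_num) |>.1 this
      rw [this]
      simp [dotProduct]
    · have hpos : 0 < ∑ j, θ j ^ 2 := lt_of_le_of_ne
        (Finset.sum_nonneg fun i _ => sq_nonneg _) (Ne.symm h0)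
      set r : ℝ := Real.sqrt (∑ j, θ j ^ 2) with hr
      have hrpos : 0 < r := Real.sqrt_pos.2 hpos
      have hmem : r⁻¹ • θ ∈ S := by
        simp only [hS, Set.mem_setOf_eq, Pi.smul_apply, smul_eq_mul, mul_pow]
        rw [← Finset.mul_sum, hr, inv_pow, Real.sq_sqrt hpos.le]
        exact inv_mul_cancel₀ hpos.ne'
      have h5 : θ₀ ⬝ᵥ A.mulVec θ₀ ≤ (r⁻¹ • θ) ⬝ᵥ A.mulVec (r⁻¹ • θ) := hmin hmem
      rw [quad_smul, inv_pow, hr, Real.sq_sqrt hpos.le] at h5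
      have h6 := mul_le_mul_of_nonneg_left h5 hpos.le
      calc (θ₀ ⬝ᵥ A.mulVec θ₀) * ∑ j, θ j ^ 2
          = (∑ j, θ j ^ 2) * (θ₀ ⬝ᵥ A.mulVec θ₀) := by ring
        _ ≤ (∑ j, θ j ^ 2) * ((∑ j, θ j ^ 2)⁻¹ * (θ ⬝ᵥ A.mulVec θ)) := h6
        _ = θ ⬝ᵥ A.mulVec θ := by field_simp



variable {n : ℕ}

lemma integrable_core {m : ℝ} (hm : 0 < m) (c : Fin n → ℝ) :
    Integrable (fun v : Fin n → ℝ => rexp (∑ j, c j * v j - m * ∑ j, v j ^ 2)) := by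
  have h := GaussianFourier.integrable_cexp_neg_mul_sum_add (b := (m : ℂ))
    (by simpa using hm) (fun j => (c j : ℂ))
  have h2 := h.norm
  refine h2.congr (Filter.Eventually.of_forall fun v => ?_)
  have hre : (-(m : ℂ) * ∑ i, (v i : ℂ) ^ 2 + ∑ i, (c i : ℂ) * (v i : ℂ))
      = ((∑ j, c j * v j - m * ∑ j, v j ^ 2 : ℝ) : ℂ) := by
    push_cast
    ring
  simp only [Complex.norm_exp, hre, Complex.ofReal_re]

lemma integrable_tilt {A : Matrix (Fin n) (Fin n) ℝ} {m : ℝ} (hm : 0 < m)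
    (hQ : ∀ θ : Fin n → ℝ, m * ∑ j, θ j ^ 2 ≤ θ ⬝ᵥ A.mulVec θ)
    (hcont : Continuous fun θ : Fin n → ℝ => θ ⬝ᵥ A.mulVec θ)
    (c : Fin n → ℝ) {s : ℝ} (hs : 0 < s) :
    Integrable (fun θ : Fin n → ℝ => rexp (c ⬝ᵥ θ - s * (θ ⬝ᵥ A.mulVec θ))) := by
  refine (integrable_core (mul_pos hs hm) c).mono' ?_ ?_
  · have : Continuous fun θ : Fin n → ℝ => c ⬝ᵥ θ := by
      simp only [dotProduct]; fun_prop
    exact (Real.continuous_exp.comp (this.sub (continuous_const.mul hcont))).aestronglyMeasurable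
  · refine Filter.Eventually.of_forall fun θ => ?_
    rw [Real.norm_eq_abs, abs_of_pos (Real.exp_pos _)]
    apply Real.exp_le_exp.2
    have h1 : c ⬝ᵥ θ = ∑ j, c j * θ j := rfl
    have h2 : s * m * ∑ j, θ j ^ 2 ≤ s * (θ ⬝ᵥ A.mulVec θ) := by
      rw [mul_assoc]
      exact mul_le_mul_of_nonneg_left (hQ θ) hs.le
    linarith

lemma integrable_negQ {A : Matrix (Fin n) (Fin n) ℝ} {m : ℝ} (hm : 0 < m)
    (hQ : ∀ θ : Fin n → ℝ, m * ∑ j, θ j ^ 2 ≤ θ ⬝ᵥ A.mulVec θ)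
    (hcont : Continuous fun θ : Fin n → ℝ => θ ⬝ᵥ A.mulVec θ) :
    Integrable (fun θ : Fin n → ℝ => rexp (-(θ ⬝ᵥ A.mulVec θ))) := by
  have := integrable_tilt hm hQ hcont 0 one_pos
  simpa using this

lemma integrable_sQ {A : Matrix (Fin n) (Fin n) ℝ} {m : ℝ} (hm : 0 < m)
    (hQ : ∀ θ : Fin n → ℝ, m * ∑ j, θ j ^ 2 ≤ θ ⬝ᵥ A.mulVec θ)
    (hcont : Continuous fun θ : Fin n → ℝ => θ ⬝ᵥ A.mulVec θ) {s : ℝ} (hs : 0 < s) :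
    Integrable (fun θ : Fin n → ℝ => rexp (-(s * (θ ⬝ᵥ A.mulVec θ)))) := by
  have := integrable_tilt hm hQ hcont 0 hs
  simpa using this

lemma integrable_lin {A : Matrix (Fin n) (Fin n) ℝ} {m : ℝ} (hm : 0 < m)
    (hQ : ∀ θ : Fin n → ℝ, m * ∑ j, θ j ^ 2 ≤ θ ⬝ᵥ A.mulVec θ)
    (hcont : Continuous fun θ : Fin n → ℝ => θ ⬝ᵥ A.mulVec θ) (lam : ℝ) (j : Fin n) :
    Integrable (fun θ : Fin n → ℝ => rexp (lam * θ j - θ ⬝ᵥ A.mulVec θ)) := by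
  have h := integrable_tilt hm hQ hcont (fun k => if k = j then lam else 0) one_pos
  have he : (fun θ : Fin n → ℝ =>
        rexp ((fun k => if k = j then lam else 0) ⬝ᵥ θ - 1 * (θ ⬝ᵥ A.mulVec θ)))
      = fun θ : Fin n → ℝ => rexp (lam * θ j - θ ⬝ᵥ A.mulVec θ) := by
    funext θ
    congr 1
    simp [dotProduct, ite_mul]
  rwa [he] at h


variable {n : ℕ}

lemma tilt_identity {A : Matrix (Fin n) (Fin n) ℝ} (hS : A.IsSymm) (hA : A.PosDef)
    (j : Fin n) (lam : ℝ) :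
    ∫ θ : Fin n → ℝ, rexp (lam * θ j - θ ⬝ᵥ A.mulVec θ)
      = rexp (lam ^ 2 * A⁻¹ j j / 4) * ∫ θ : Fin n → ℝ, rexp (-(θ ⬝ᵥ A.mulVec θ)) := by
  have hunit : IsUnit A.det := A.isUnit_iff_isUnit_det.1 hA.isUnit
  set v : Fin n → ℝ := (lam / 2) • (A⁻¹ *ᵥ Pi.single j 1) with hv
  have hAv : A *ᵥ v = (lam / 2) • (Pi.single j 1 : Fin n → ℝ) := by
    rw [hv, Matrix.mulVec_smul, Matrix.mulVec_mulVec, Matrix.mul_nonsing_inv _ hunit,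
      Matrix.one_mulVec]
  have hvj : v j = lam / 2 * A⁻¹ j j := by
    rw [hv]
    simp [Matrix.mulVec_single]
  have key : ∀ θ : Fin n → ℝ, (θ - v) ⬝ᵥ A.mulVec (θ - v)
      = θ ⬝ᵥ A.mulVec θ - lam * θ j + lam ^ 2 * A⁻¹ j j / 4 := by
    intro θ
    have h1 : θ ⬝ᵥ A.mulVec v = lam / 2 * θ j := by
      rw [hAv, dotProduct_smul, dotProduct_single]
      simp [smul_eq_mul]
    have h2 : v ⬝ᵥ A.mulVec θ = lam / 2 * θ j := by
      have hsymm : v ᵥ* A = A *ᵥ v := by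
        conv_lhs => rw [← hS]
        exact Matrix.vecMul_transpose A v
      rw [Matrix.dotProduct_mulVec, hsymm, hAv, smul_dotProduct,
        single_dotProduct]
      simp [smul_eq_mul]
    have h3 : v ⬝ᵥ A.mulVec v = lam ^ 2 * A⁻¹ j j / 4 := by
      rw [hAv, dotProduct_smul, dotProduct_single, hvj]
      simp [smul_eq_mul]
      ring
    rw [Matrix.mulVec_sub, dotProduct_sub, sub_dotProduct,
      sub_dotProduct, h1, h2, h3]
    ring
  have step : ∀ θ : Fin n → ℝ, rexp (lam * θ j - θ ⬝ᵥ A.mulVec θ)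
      = rexp (lam ^ 2 * A⁻¹ j j / 4) * rexp (-((θ - v) ⬝ᵥ A.mulVec (θ - v))) := by
    intro θ
    rw [← Real.exp_add, key θ]
    congr 1
    ring
  calc ∫ θ : Fin n → ℝ, rexp (lam * θ j - θ ⬝ᵥ A.mulVec θ)
      = ∫ θ : Fin n → ℝ, rexp (lam ^ 2 * A⁻¹ j j / 4)
          * rexp (-((θ - v) ⬝ᵥ A.mulVec (θ - v))) := by
        simp_rw [step]
    _ = rexp (lam ^ 2 * A⁻¹ j j / 4)
          * ∫ θ : Fin n → ℝ, rexp (-((θ - v) ⬝ᵥ A.mulVec (θ - v))) := by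
        rw [integral_const_mul]
    _ = rexp (lam ^ 2 * A⁻¹ j j / 4) * ∫ θ : Fin n → ℝ, rexp (-(θ ⬝ᵥ A.mulVec θ)) := by
        congr 1
        have := integral_add_right_eq_self (μ := (volume : Measure (Fin n → ℝ)))
          (fun θ : Fin n → ℝ => rexp (-(θ ⬝ᵥ A.mulVec θ))) (-v)
        rw [← this]
        apply integral_congr_ae
        refine Filter.Eventually.of_forall fun θ => ?_
        simp [sub_eq_add_neg]


lemma quad_smul' (A : Matrix (Fin n) (Fin n) ℝ) (c : ℝ) (θ : Fin n → ℝ) :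
    (c • θ) ⬝ᵥ A.mulVec (c • θ) = c ^ 2 * (θ ⬝ᵥ A.mulVec θ) := by
  rw [Matrix.mulVec_smul, dotProduct_smul, smul_dotProduct]
  simp [smul_eq_mul]; ring

lemma half_tail {A : Matrix (Fin n) (Fin n) ℝ} (hS : A.IsSymm) (hA : A.PosDef)
    {bb : ℝ} (hb : 0 < bb) {j : Fin n} (hd : A⁻¹ j j ≤ bb) (hdpos : 0 < A⁻¹ j j)
    (hint_lin : ∀ lam : ℝ,
      Integrable (fun θ : Fin n → ℝ => rexp (lam * θ j - θ ⬝ᵥ A.mulVec θ)))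
    (hint : Integrable (fun θ : Fin n → ℝ => rexp (-(θ ⬝ᵥ A.mulVec θ))))
    {t : ℝ} (ht : 0 ≤ t) {s : ℝ} (hs : s = 1 ∨ s = -1) :
    ∫ θ in {θ : Fin n → ℝ | t ≤ s * θ j}, rexp (-(θ ⬝ᵥ A.mulVec θ))
      ≤ rexp (-(t ^ 2 / bb)) * ∫ θ : Fin n → ℝ, rexp (-(θ ⬝ᵥ A.mulVec θ)) := by
  set d := A⁻¹ j j with hdd
  set μ := 2 * t / d with hμd
  have hμ : 0 ≤ μ := by positivity
  have hs2 : s ^ 2 = 1 := by rcases hs with h | h <;> subst h <;> norm_num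
  have meas : MeasurableSet {θ : Fin n → ℝ | t ≤ s * θ j} :=
    measurableSet_le measurable_const (by fun_prop)
  have hint2 : Integrable
      (fun θ : Fin n → ℝ => rexp (μ * s * θ j - μ * t - θ ⬝ᵥ A.mulVec θ)) := by
    have h0 := (hint_lin (μ * s)).mul_const (rexp (-(μ * t)))
    refine h0.congr (Filter.Eventually.of_forall fun θ => ?_)
    show rexp (μ * s * θ j - θ ⬝ᵥ A.mulVec θ) * rexp (-(μ * t)) = _
    rw [← Real.exp_add]
    congr 1
    ring
  have step1 : ∫ θ in {θ : Fin n → ℝ | t ≤ s * θ j}, rexp (-(θ ⬝ᵥ A.mulVec θ))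
      ≤ ∫ θ in {θ : Fin n → ℝ | t ≤ s * θ j},
          rexp (μ * s * θ j - μ * t - θ ⬝ᵥ A.mulVec θ) := by
    refine setIntegral_mono_on hint.integrableOn hint2.integrableOn meas fun θ hθ => ?_
    have hθ' : t ≤ s * θ j := hθ
    have h0 : 0 ≤ μ * (s * θ j - t) := mul_nonneg hμ (by linarith)
    apply Real.exp_le_exp.2
    nlinarith [h0]
  have step2 : ∫ θ in {θ : Fin n → ℝ | t ≤ s * θ j},
        rexp (μ * s * θ j - μ * t - θ ⬝ᵥ A.mulVec θ)
      ≤ ∫ θ : Fin n → ℝ, rexp (μ * s * θ j - μ * t - θ ⬝ᵥ A.mulVec θ) :=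
    setIntegral_le_integral hint2
      (Filter.Eventually.of_forall fun θ => (Real.exp_pos _).le)
  have step3 : ∫ θ : Fin n → ℝ, rexp (μ * s * θ j - μ * t - θ ⬝ᵥ A.mulVec θ)
      = rexp ((μ * s) ^ 2 * d / 4) * rexp (-(μ * t))
          * ∫ θ : Fin n → ℝ, rexp (-(θ ⬝ᵥ A.mulVec θ)) := by
    have e1 : (fun θ : Fin n → ℝ => rexp (μ * s * θ j - μ * t - θ ⬝ᵥ A.mulVec θ))
        = fun θ : Fin n → ℝ =>
            rexp ((μ * s) * θ j - θ ⬝ᵥ A.mulVec θ) * rexp (-(μ * t)) := by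
      funext θ
      rw [← Real.exp_add]
      congr 1
      ring
    rw [e1, integral_mul_const, tilt_identity hS hA j (μ * s)]
    ring
  have hconst : rexp ((μ * s) ^ 2 * d / 4) * rexp (-(μ * t)) = rexp (-(t ^ 2 / d)) := by
    rw [← Real.exp_add]
    congr 1
    rw [mul_pow, hs2, mul_one, hμd]
    field_simp
    ring
  have hle : rexp (-(t ^ 2 / d)) ≤ rexp (-(t ^ 2 / bb)) := by
    apply Real.exp_le_exp.2
    have : t ^ 2 / bb ≤ t ^ 2 / d := by gcongr
    linarith
  have hpos : 0 ≤ ∫ θ : Fin n → ℝ, rexp (-(θ ⬝ᵥ A.mulVec θ)) :=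
    integral_nonneg fun θ => (Real.exp_pos _).le
  calc ∫ θ in {θ : Fin n → ℝ | t ≤ s * θ j}, rexp (-(θ ⬝ᵥ A.mulVec θ))
      ≤ ∫ θ : Fin n → ℝ, rexp (μ * s * θ j - μ * t - θ ⬝ᵥ A.mulVec θ) :=
        le_trans step1 step2
    _ = rexp (-(t ^ 2 / d)) * ∫ θ : Fin n → ℝ, rexp (-(θ ⬝ᵥ A.mulVec θ)) := by
        rw [step3, hconst]
    _ ≤ rexp (-(t ^ 2 / bb)) * ∫ θ : Fin n → ℝ, rexp (-(θ ⬝ᵥ A.mulVec θ)) :=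
        mul_le_mul_of_nonneg_right hle hpos

lemma scale_identity (A : Matrix (Fin n) (Fin n) ℝ) {s : ℝ} (hs : 0 < s) :
    ∫ θ : Fin n → ℝ, rexp (-(s * (θ ⬝ᵥ A.mulVec θ)))
      = ((Real.sqrt s) ^ n)⁻¹ * ∫ θ : Fin n → ℝ, rexp (-(θ ⬝ᵥ A.mulVec θ)) := by
  have h := Measure.integral_comp_smul_of_nonneg (μ := (volume : Measure (Fin n → ℝ)))
    (fun θ : Fin n → ℝ => rexp (-(θ ⬝ᵥ A.mulVec θ))) (Real.sqrt s)
    (hR := Real.sqrt_nonneg s)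
  rw [show Module.finrank ℝ (Fin n → ℝ) = n from by simp] at h
  rw [smul_eq_mul] at h
  rw [← h]
  apply integral_congr_ae
  refine Filter.Eventually.of_forall fun θ => ?_
  have := quad_smul' A (Real.sqrt s) θ
  simp only [this, Real.sq_sqrt hs.le]



variable {n : ℕ}

lemma quad_upper {A : Matrix (Fin n) (Fin n) ℝ} {a : ℝ} (ha : 0 ≤ a)
    (hdiag : ∀ j, A j j = 1) (hoff : ∀ j k, j ≠ k → |A j k| ≤ a / n)
    {ρ : ℝ} (hρ : 0 ≤ ρ) {θ : Fin n → ℝ} (hθ : ∀ j, |θ j| ≤ ρ) :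
    θ ⬝ᵥ A.mulVec θ ≤ (1 + a) * n * ρ ^ 2 := by
  rcases Nat.eq_zero_or_pos n with hn | hn
  · subst hn
    simp [dotProduct]
  have hn' : (0 : ℝ) < n := by exact_mod_cast hn
  have habs : ∀ j k : Fin n, θ j * (A j k * θ k) ≤ |A j k| * ρ ^ 2 := by
    intro j k
    calc θ j * (A j k * θ k) ≤ |θ j * (A j k * θ k)| := le_abs_self _
      _ = |θ j| * |A j k| * |θ k| := by rw [abs_mul, abs_mul]; ring
      _ ≤ ρ * |A j k| * ρ := by
          apply mul_le_mul (mul_le_mul_of_nonneg_right (hθ j) (abs_nonneg _)) (hθ k)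
            (abs_nonneg _) (mul_nonneg hρ (abs_nonneg _))
      _ = |A j k| * ρ ^ 2 := by ring
  have hAbd : ∀ j k : Fin n, |A j k| * ρ ^ 2
      ≤ (if j = k then ρ ^ 2 else 0) + a / n * ρ ^ 2 := by
    intro j k
    by_cases h : j = k
    · subst h
      rw [hdiag j]
      have he : (if j = j then ρ ^ 2 else 0) = ρ ^ 2 := by simp
      rw [he, abs_one, one_mul]
      have : 0 ≤ a / n * ρ ^ 2 := by positivity
      linarith
    · simp only [if_neg h]
      have := mul_le_mul_of_nonneg_right (hoff j k h) (sq_nonneg ρ)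
      linarith
  calc θ ⬝ᵥ A.mulVec θ = ∑ j, ∑ k, θ j * (A j k * θ k) := by
        simp [dotProduct, Matrix.mulVec, Finset.mul_sum]
    _ ≤ ∑ j : Fin n, ∑ k : Fin n, ((if j = k then ρ ^ 2 else 0) + a / n * ρ ^ 2) := by
        apply Finset.sum_le_sum
        intro j _
        apply Finset.sum_le_sum
        intro k _
        exact (habs j k).trans (hAbd j k)
    _ = (1 + a) * n * ρ ^ 2 := by
        simp [Finset.sum_add_distrib, Finset.sum_ite_eq, Finset.card_univ]
        field_simp

lemma nat_bound {c₃ ε : ℝ} (hc₃ : 0 < c₃) (hε : 0 < ε) :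
    ∃ C : ℝ, 0 < C ∧ ∀ n : ℕ,
      (2 * n : ℝ) * rexp (-(2 * c₃) * (n : ℝ) ^ (2 * ε))
        ≤ C * rexp (-c₃ * (n : ℝ) ^ (2 * ε)) := by
  set m : ℕ := ⌈1 / (2 * ε)⌉₊ + 1 with hm
  refine ⟨2 * (m.factorial : ℝ) / c₃ ^ m, by positivity, fun n => ?_⟩
  rcases Nat.eq_zero_or_pos n with hn | hn
  · subst hn
    simp only [Nat.cast_zero, mul_zero, zero_mul]
    positivity
  have hn1 : (1 : ℝ) ≤ n := by exact_mod_cast hn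
  set x : ℝ := (n : ℝ) ^ (2 * ε) with hx
  have hx1 : 1 ≤ x := Real.one_le_rpow hn1 (by positivity)
  have hx0 : 0 ≤ x := by linarith
  -- key : (2*n : ℝ) ≤ C * rexp (c₃ * x)
  have hkey : (2 * n : ℝ) ≤ 2 * (m.factorial : ℝ) / c₃ ^ m * rexp (c₃ * x) := by
    have step1 : (n : ℝ) ≤ x ^ m := by
      have h1 : (n : ℝ) = (n : ℝ) ^ (1 : ℝ) := (Real.rpow_one _).symm
      have h2 : (1 : ℝ) ≤ 2 * ε * m := by
        have hceil : 1 / (2 * ε) ≤ (m : ℝ) := by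
          have := Nat.le_ceil (1 / (2 * ε))
          have hle : (⌈1 / (2 * ε)⌉₊ : ℝ) ≤ m := by
            exact_mod_cast Nat.le_succ _
          linarith
        calc (1 : ℝ) = 2 * ε * (1 / (2 * ε)) := by field_simp
          _ ≤ 2 * ε * m := by
              apply mul_le_mul_of_nonneg_left hceil (by positivity)
      calc (n : ℝ) = (n : ℝ) ^ (1 : ℝ) := (Real.rpow_one _).symm
        _ ≤ (n : ℝ) ^ (2 * ε * m) := Real.rpow_le_rpow_of_exponent_le hn1 h2
        _ = ((n : ℝ) ^ (2 * ε)) ^ ((m : ℕ) : ℝ) := by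
            rw [Real.rpow_mul (by positivity : (0:ℝ) ≤ (n : ℝ))]
        _ = x ^ m := by rw [Real.rpow_natCast]
    have step2 : x ^ m ≤ (m.factorial : ℝ) / c₃ ^ m * rexp (c₃ * x) := by
      have h3 := Real.pow_div_factorial_le_exp (c₃ * x) (by positivity) m
      rw [mul_pow] at h3
      rw [div_mul_eq_mul_div, le_div_iff₀ (by positivity : (0:ℝ) < c₃ ^ m)]
      rw [div_le_iff₀ (by positivity : (0:ℝ) < (m.factorial : ℝ))] at h3
      nlinarith [h3]
    calc (2 * n : ℝ) ≤ 2 * x ^ m := by linarith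
      _ ≤ 2 * ((m.factorial : ℝ) / c₃ ^ m * rexp (c₃ * x)) := by
          apply mul_le_mul_of_nonneg_left step2 (by norm_num)
      _ = 2 * (m.factorial : ℝ) / c₃ ^ m * rexp (c₃ * x) := by ring
  have hexp : rexp (-(2 * c₃) * x) = rexp (-(c₃ * x)) * rexp (-c₃ * x) := by
    rw [← Real.exp_add]
    congr 1
    ring
  calc (2 * n : ℝ) * rexp (-(2 * c₃) * x)
      = (2 * n : ℝ) * rexp (-(c₃ * x)) * rexp (-c₃ * x) := by rw [hexp]; ring
    _ ≤ 2 * (m.factorial : ℝ) / c₃ ^ m * rexp (c₃ * x) * rexp (-(c₃ * x))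
          * rexp (-c₃ * x) := by
        have h4 : (0 : ℝ) < rexp (-(c₃ * x)) := Real.exp_pos _
        have h5 : (0 : ℝ) < rexp (-c₃ * x) := Real.exp_pos _
        exact mul_le_mul_of_nonneg_right
          (mul_le_mul_of_nonneg_right hkey h4.le) h5.le
    _ = 2 * (m.factorial : ℝ) / c₃ ^ m * rexp (-c₃ * x) := by
        rw [mul_assoc (2 * (m.factorial : ℝ) / c₃ ^ m), ← Real.exp_add]
        simp



variable {n : ℕ}

lemma lp2_eq (x : Fin n → ℝ) : lpnorm 2 x = Real.sqrt (∑ j, x j ^ 2) := by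
  rw [lpnorm, if_neg (by norm_num)]
  have ht : (2 : ENNReal).toReal = 2 := by norm_num
  rw [ht]
  have h1 : ∀ j : Fin n, |x j| ^ (2 : ℝ) = x j ^ 2 := fun j => by
    rw [show (2:ℝ) = ((2:ℕ):ℝ) by norm_num, Real.rpow_natCast, sq_abs]
  simp_rw [h1]
  rw [Real.sqrt_eq_rpow]

lemma lp2_pos {x : Fin n → ℝ} (hx : x ≠ 0) : 0 < lpnorm 2 x := by
  rw [lp2_eq]
  apply Real.sqrt_pos.2
  obtain ⟨j, hj⟩ : ∃ j, x j ≠ 0 := by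
    by_contra h
    push_neg at h
    exact hx (funext h)
  have h1 : 0 < x j ^ 2 := by positivity
  have h2 : x j ^ 2 ≤ ∑ k, x k ^ 2 := Finset.single_le_sum (f := fun k => x k ^ 2)
    (fun i _ => sq_nonneg _) (Finset.mem_univ j)
  linarith

lemma lp2_mulVec_le (M : Matrix (Fin n) (Fin n) ℝ) (x : Fin n → ℝ) :
    lpnorm 2 (M.mulVec x) ≤ Real.sqrt (∑ j, ∑ k, M j k ^ 2) * lpnorm 2 x := by
  rw [lp2_eq, lp2_eq, ← Real.sqrt_mul (by positivity)]
  apply Real.sqrt_le_sqrt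
  rw [Finset.sum_mul]
  apply Finset.sum_le_sum
  intro j _
  have h1 : M.mulVec x j = ∑ k, M j k * x k := rfl
  rw [h1]
  exact Finset.sum_mul_sq_le_sq_mul_sq Finset.univ (fun k => M j k) x

lemma bddAbove_ratio (M : Matrix (Fin n) (Fin n) ℝ) :
    BddAbove {c : ℝ | ∃ x : Fin n → ℝ, x ≠ 0 ∧ c = lpnorm 2 (M.mulVec x) / lpnorm 2 x} := by
  refine ⟨Real.sqrt (∑ j, ∑ k, M j k ^ 2), fun c hc => ?_⟩
  obtain ⟨x, hx, rfl⟩ := hc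
  rw [div_le_iff₀ (lp2_pos hx)]
  exact lp2_mulVec_le M x

lemma diag_le_opNorm (M : Matrix (Fin n) (Fin n) ℝ) (j : Fin n) :
    M j j ≤ opNorm 2 M := by
  have hx : (Pi.single j 1 : Fin n → ℝ) ≠ 0 := by
    intro h
    have := congrFun h j
    simp at this
  have hone : lpnorm 2 (Pi.single j 1 : Fin n → ℝ) = 1 := by
    rw [lp2_eq]
    have : ∑ k, (Pi.single j 1 : Fin n → ℝ) k ^ 2 = 1 := by
      simp [Pi.single_apply]
    rw [this, Real.sqrt_one]
  have hmem : lpnorm 2 (M.mulVec (Pi.single j 1)) / lpnorm 2 (Pi.single j 1 : Fin n → ℝ)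
      ∈ {c : ℝ | ∃ x : Fin n → ℝ, x ≠ 0 ∧ c = lpnorm 2 (M.mulVec x) / lpnorm 2 x} :=
    ⟨Pi.single j 1, hx, rfl⟩
  have hle : M j j ≤ lpnorm 2 (M.mulVec (Pi.single j 1)) := by
    rw [lp2_eq]
    have h1 : M.mulVec (Pi.single j 1) = fun i => M i j * 1 := Matrix.mulVec_single M j 1
    calc M j j ≤ |M j j| := le_abs_self _
      _ = Real.sqrt ((M j j) ^ 2) := (Real.sqrt_sq_eq_abs _).symm
      _ ≤ Real.sqrt (∑ i, M.mulVec (Pi.single j 1) i ^ 2) := by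
          apply Real.sqrt_le_sqrt
          have h2 : M.mulVec (Pi.single j 1) j ^ 2
              ≤ ∑ i, M.mulVec (Pi.single j 1) i ^ 2 := Finset.single_le_sum
            (f := fun i => M.mulVec (Pi.single j 1) i ^ 2)
            (fun i _ => sq_nonneg _) (Finset.mem_univ j)
          have h3 : M.mulVec (Pi.single j 1) j = M j j := by rw [h1]; simp
          rw [h3] at h2
          exact h2
  calc M j j ≤ lpnorm 2 (M.mulVec (Pi.single j 1)) := hle
    _ = lpnorm 2 (M.mulVec (Pi.single j 1)) / lpnorm 2 (Pi.single j 1 : Fin n → ℝ) := by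
        rw [hone, div_one]
    _ ≤ opNorm 2 M := le_csSup (bddAbove_ratio M) hmem

lemma diag_inv_pos {A : Matrix (Fin n) (Fin n) ℝ} (hA : A.PosDef) (j : Fin n) :
    0 < A⁻¹ j j := by
  have hinv : (A⁻¹).PosDef := hA.inv
  have hx : (Pi.single j 1 : Fin n → ℝ) ≠ 0 := by
    intro h
    have := congrFun h j
    simp at this
  have := hinv.re_dotProduct_pos hx
  simpa [single_dotProduct, Matrix.mulVec_single] using this



lemma exp_neg_two_le {y : ℝ} (hy : 0 < y) (hy2 : y ≤ 1 / 2) :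
    Real.exp (-(2 * y)) ≤ 1 - y := by
  have h1 : 2 * y + 1 ≤ Real.exp (2 * y) := Real.add_one_le_exp _
  have hmul : Real.exp (-(2 * y)) * Real.exp (2 * y) = 1 := by
    rw [← Real.exp_add]; simp
  have hepos : 0 < Real.exp (2 * y) := Real.exp_pos _
  have hint1 := mul_le_mul_of_nonneg_left h1 (show (0:ℝ) ≤ 1 - y by linarith)
  have hint2 : 0 ≤ y * (1 - 2 * y) := mul_nonneg hy.le (by linarith)
  have hexpand : (1 - y) * (2 * y + 1) = 1 + y * (1 - 2 * y) := by ring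
  have key : 1 ≤ (1 - y) * Real.exp (2 * y) := by linarith
  have h6 : Real.exp (-(2 * y)) * Real.exp (2 * y) ≤ (1 - y) * Real.exp (2 * y) := by
    rw [hmul]; exact key
  exact le_of_mul_le_mul_right h6 hepos

lemma inv_sqrt_pow_le {c₁ : ℝ} (hc₁ : 0 < c₁) {n : ℕ} (hn : (1:ℝ) ≤ n)
    (h2 : c₁ / (n : ℝ) ≤ 1 / 2) :
    ((Real.sqrt (1 - c₁ / (n : ℝ))) ^ n)⁻¹ ≤ Real.exp c₁ := by
  have hnpos : (0 : ℝ) < n := by linarith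
  have hy : 0 < c₁ / (n : ℝ) := by positivity
  have hsc : 0 < 1 - c₁ / (n : ℝ) := by linarith
  have hexp2 : Real.exp (-(2 * (c₁ / n))) ≤ 1 - c₁ / (n : ℝ) := exp_neg_two_le hy h2
  have hx : Real.exp (-(c₁ / n)) ≤ Real.sqrt (1 - c₁ / (n : ℝ)) := by
    rw [Real.le_sqrt (Real.exp_pos _).le hsc.le]
    have hsq : Real.exp (-(c₁ / n)) ^ 2 = Real.exp (-(2 * (c₁ / n))) := by
      rw [sq, ← Real.exp_add]; ring_nf
    rw [hsq]; exact hexp2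
  have hpow : Real.exp (-c₁) ≤ (Real.sqrt (1 - c₁ / (n : ℝ))) ^ n := by
    have h4 : (Real.exp (-(c₁ / n))) ^ n ≤ (Real.sqrt (1 - c₁ / (n : ℝ))) ^ n :=
      pow_le_pow_left₀ (Real.exp_pos _).le hx n
    have h5 : (Real.exp (-(c₁ / n))) ^ n = Real.exp (-c₁) := by
      rw [← Real.exp_nat_mul]
      congr 1
      field_simp
    rw [← h5]; exact h4
  calc ((Real.sqrt (1 - c₁ / (n : ℝ))) ^ n)⁻¹ ≤ (Real.exp (-c₁))⁻¹ :=
        inv_anti₀ (Real.exp_pos _) hpow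
    _ = Real.exp c₁ := by rw [Real.exp_neg, inv_inv]


end RegionAux

/-- Lemma 4.2 (4.19)–(4.20) of the paper: concentration of the Gaussian-type
integral on `Ω`, and boundedness of `⟨1⟩_{F,Ω}` by `⟨1⟩`. -/
theorem integral_region_estimates (a b ε r₁ r₂ c₁ c₂ : ℝ) (ha : 0 < a) (hb : 0 < b)
    (hε : 0 < ε) (hr₁ : 0 < r₁) (hr₁₂ : r₁ < r₂) (hc₁ : 0 < c₁) (hc₂ : 0 < c₂) :
    ∃ c₃ c : ℝ, 0 < c₃ ∧ 0 < c ∧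
      ∀ (n : ℕ) (A : Matrix (Fin n) (Fin n) ℝ), CondA a b A →
      ∀ H : (Fin n → ℝ) → ℝ, CondH c₁ c₂ A H →
      ∀ Ω : Set (Fin n → ℝ), MeasurableSet Ω →
        Uset n (r₁ * (n : ℝ) ^ (ε : ℝ)) ⊆ Ω → Ω ⊆ Uset n (r₂ * (n : ℝ) ^ (ε : ℝ)) →
        ((∃ δ : ℝ, |δ| ≤ c * Real.exp (-c₃ * (n : ℝ) ^ (2 * ε)) ∧
            (∫ θ in Ω, Real.exp (-(θ ⬝ᵥ A.mulVec θ))) =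
              (1 + δ) * ∫ θ : Fin n → ℝ, Real.exp (-(θ ⬝ᵥ A.mulVec θ))) ∧
          |∫ θ in Ω, Real.exp (-(θ ⬝ᵥ A.mulVec θ) + H θ)| ≤
            c * ∫ θ : Fin n → ℝ, Real.exp (-(θ ⬝ᵥ A.mulVec θ))) := by
  classical
  -- constants
  set c₃ : ℝ := r₁ ^ 2 / (2 * b) with hc₃def
  have hc₃ : 0 < c₃ := by positivity
  obtain ⟨C₁, hC₁, hC₁bd⟩ := RegionAux.nat_bound hc₃ hε
  set N₀ : ℕ := ⌈2 * c₁⌉₊ + 1 with hN₀def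
  set LK : ℝ := c₁ * (1 + a) * r₂ ^ 2 * (N₀ : ℝ) ^ (2 * ε) with hLKdef
  have hLK : 0 ≤ LK := by positivity
  set K : ℝ := Real.exp LK with hKdef
  have hK1 : 1 ≤ K := Real.one_le_exp hLK
  set c : ℝ := C₁ + Real.exp c₁ + K + 1 with hcdef
  have hc : 0 < c := by positivity
  refine ⟨c₃, c, hc₃, hc, ?_⟩
  intro n A hA H hH Ω hΩmeas hΩ₁ hΩ₂
  obtain ⟨hsymm, hpd, hdiag, hoff, hop⟩ := hA
  obtain ⟨hHc, hH1, -⟩ := hH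
  have hcontQ := RegionAux.continuous_quad A
  obtain ⟨m, hm, hQlow⟩ := RegionAux.posdef_lower hpd
  have hQ0 : ∀ θ : Fin n → ℝ, 0 ≤ θ ⬝ᵥ A.mulVec θ := fun θ =>
    le_trans (by positivity) (hQlow θ)
  have hint : Integrable (fun θ : Fin n → ℝ => Real.exp (-(θ ⬝ᵥ A.mulVec θ))) :=
    RegionAux.integrable_negQ hm hQlow hcontQ
  set T : ℝ := ∫ θ : Fin n → ℝ, Real.exp (-(θ ⬝ᵥ A.mulVec θ)) with hTdef
  have hT : 0 < T := by
    rw [hTdef,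
      integral_pos_iff_support_of_nonneg (fun θ => (Real.exp_pos _).le) hint]
    have hsupp : (Function.support fun θ : Fin n → ℝ =>
        Real.exp (-(θ ⬝ᵥ A.mulVec θ))) = Set.univ :=
      Set.eq_univ_of_forall fun θ => (Real.exp_pos _).ne'
    rw [hsupp]
    exact isOpen_univ.measure_pos volume Set.univ_nonempty
  -- tail estimate setup
  set t : ℝ := r₁ * (n : ℝ) ^ (ε : ℝ) with htdef
  have ht0 : 0 ≤ t := by positivity
  have hdle : ∀ j : Fin n, A⁻¹ j j ≤ b := fun j =>
    (RegionAux.diag_le_opNorm A⁻¹ j).trans hop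
  have hdpos : ∀ j : Fin n, 0 < A⁻¹ j j := RegionAux.diag_inv_pos hpd
  have hint_lin : ∀ (lam : ℝ) (j : Fin n),
      Integrable (fun θ : Fin n → ℝ => Real.exp (lam * θ j - θ ⬝ᵥ A.mulVec θ)) :=
    fun lam j => RegionAux.integrable_lin hm hQlow hcontQ lam j
  set f : (Fin n → ℝ) → ℝ := fun θ => Real.exp (-(θ ⬝ᵥ A.mulVec θ)) with hfdef
  have hf_nonneg : ∀ θ, 0 ≤ f θ := fun θ => (Real.exp_pos _).le
  set sP : Fin n → Set (Fin n → ℝ) := fun j => {θ | t ≤ 1 * θ j} with hsPdef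
  set sM : Fin n → Set (Fin n → ℝ) := fun j => {θ | t ≤ (-1) * θ j} with hsMdef
  have hmeasP : ∀ j, MeasurableSet (sP j) := fun j =>
    measurableSet_le measurable_const ((measurable_pi_apply j).const_mul 1)
  have hmeasM : ∀ j, MeasurableSet (sM j) := fun j =>
    measurableSet_le measurable_const ((measurable_pi_apply j).const_mul (-1))
  have hhalfP : ∀ j, ∫ θ in sP j, f θ ≤ Real.exp (-(t ^ 2 / b)) * T := fun j =>
    RegionAux.half_tail hsymm hpd hb (hdle j) (hdpos j)
      (fun lam => hint_lin lam j) hint ht0 (Or.inl rfl)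
  have hhalfM : ∀ j, ∫ θ in sM j, f θ ≤ Real.exp (-(t ^ 2 / b)) * T := fun j =>
    RegionAux.half_tail hsymm hpd hb (hdle j) (hdpos j)
      (fun lam => hint_lin lam j) hint ht0 (Or.inr rfl)
  have hcov : ∀ θ, Set.indicator Ωᶜ f θ
      ≤ ∑ j, (Set.indicator (sP j) f θ + Set.indicator (sM j) f θ) := by
    intro θ
    by_cases hθ : θ ∈ Ωᶜ
    · rw [Set.indicator_of_mem hθ]
      have hnotU : θ ∉ Uset n (r₁ * (n : ℝ) ^ (ε : ℝ)) := fun h => hθ (hΩ₁ h)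
      simp only [Uset, Set.mem_setOf_eq, not_forall, not_le] at hnotU
      obtain ⟨j, hj⟩ := hnotU
      have hcase : θ ∈ sP j ∨ θ ∈ sM j := by
        rcases le_abs.1 hj.le with h | h
        · left; show t ≤ 1 * θ j; linarith
        · right; show t ≤ (-1) * θ j; linarith
      have hterm : ∀ k ∈ Finset.univ, (0:ℝ)
          ≤ Set.indicator (sP k) f θ + Set.indicator (sM k) f θ := fun k _ =>
        add_nonneg (Set.indicator_nonneg (fun x _ => hf_nonneg x) θ)
          (Set.indicator_nonneg (fun x _ => hf_nonneg x) θ)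
      refine le_trans ?_ (Finset.single_le_sum hterm (Finset.mem_univ j))
      rcases hcase with h | h
      · rw [Set.indicator_of_mem h]
        exact le_add_of_nonneg_right (Set.indicator_nonneg (fun x _ => hf_nonneg x) θ)
      · rw [Set.indicator_of_mem h]
        exact le_add_of_nonneg_left (Set.indicator_nonneg (fun x _ => hf_nonneg x) θ)
    · rw [Set.indicator_of_notMem hθ]
      exact Finset.sum_nonneg fun k _ =>
        add_nonneg (Set.indicator_nonneg (fun x _ => hf_nonneg x) θ)
          (Set.indicator_nonneg (fun x _ => hf_nonneg x) θ)
  have htail : ∫ θ in Ωᶜ, f θ ≤ 2 * n * (Real.exp (-(t ^ 2 / b)) * T) := by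
    have hintP : ∀ j, Integrable (Set.indicator (sP j) f) := fun j =>
      hint.indicator (hmeasP j)
    have hintM : ∀ j, Integrable (Set.indicator (sM j) f) := fun j =>
      hint.indicator (hmeasM j)
    calc ∫ θ in Ωᶜ, f θ = ∫ θ, Set.indicator Ωᶜ f θ :=
          (integral_indicator hΩmeas.compl).symm
      _ ≤ ∫ θ, ∑ j, (Set.indicator (sP j) f θ + Set.indicator (sM j) f θ) :=
          integral_mono (hint.indicator hΩmeas.compl)
            (integrable_finset_sum _ fun j _ => (hintP j).add (hintM j)) hcov
      _ = ∑ j, ((∫ θ, Set.indicator (sP j) f θ) + ∫ θ, Set.indicator (sM j) f θ) := by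
          have hfs := integral_finset_sum (μ := (volume : Measure (Fin n → ℝ)))
            Finset.univ
            (f := fun j (θ : Fin n → ℝ) =>
              Set.indicator (sP j) f θ + Set.indicator (sM j) f θ)
            (fun j _ => (hintP j).add (hintM j))
          rw [hfs]
          exact Finset.sum_congr rfl fun j _ => integral_add (hintP j) (hintM j)
      _ = ∑ j, ((∫ θ in sP j, f θ) + ∫ θ in sM j, f θ) := by
          refine Finset.sum_congr rfl fun j _ => ?_
          rw [integral_indicator (hmeasP j), integral_indicator (hmeasM j)]
      _ ≤ ∑ j : Fin n, (Real.exp (-(t ^ 2 / b)) * T + Real.exp (-(t ^ 2 / b)) * T) :=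
          Finset.sum_le_sum fun j _ => add_le_add (hhalfP j) (hhalfM j)
      _ = 2 * n * (Real.exp (-(t ^ 2 / b)) * T) := by
          rw [Finset.sum_const, Finset.card_univ, Fintype.card_fin]
          simp [nsmul_eq_mul]
          ring
  have ht2 : t ^ 2 / b = 2 * c₃ * (n : ℝ) ^ (2 * ε) := by
    have hsq : ((n : ℝ) ^ (ε : ℝ)) ^ (2 : ℕ) = (n : ℝ) ^ (2 * ε) := by
      rw [← Real.rpow_natCast ((n : ℝ) ^ (ε : ℝ)) 2,
        ← Real.rpow_mul (Nat.cast_nonneg n)]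
      norm_num [mul_comm]
    rw [htdef, mul_pow, hsq, hc₃def]
    field_simp
  -- part (i)
  have hΩint : (∫ θ in Ω, f θ) + ∫ θ in Ωᶜ, f θ = T := by
    rw [hTdef]
    exact integral_add_compl hΩmeas hint
  have hΩnn : 0 ≤ ∫ θ in Ω, f θ := integral_nonneg hf_nonneg
  have hΩcnn : 0 ≤ ∫ θ in Ωᶜ, f θ := integral_nonneg hf_nonneg
  constructor
  · refine ⟨(∫ θ in Ω, f θ) / T - 1, ?_, ?_⟩
    · have habs : |(∫ θ in Ω, f θ) / T - 1| = (∫ θ in Ωᶜ, f θ) / T := by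
        rw [abs_of_nonpos]
        · rw [eq_div_iff hT.ne']
          field_simp
          linarith
        · rw [sub_nonpos, div_le_one hT]
          linarith
      rw [habs]
      have hstep : (∫ θ in Ωᶜ, f θ) / T ≤ 2 * n * Real.exp (-(t ^ 2 / b)) := by
        rw [div_le_iff₀ hT]
        calc ∫ θ in Ωᶜ, f θ ≤ 2 * n * (Real.exp (-(t ^ 2 / b)) * T) := htail
          _ = 2 * n * Real.exp (-(t ^ 2 / b)) * T := by ring
      have hexp : Real.exp (-(t ^ 2 / b)) = Real.exp (-(2 * c₃) * (n : ℝ) ^ (2 * ε)) := by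
        rw [ht2]; ring_nf
      have hfinal : (2 * n : ℝ) * Real.exp (-(2 * c₃) * (n : ℝ) ^ (2 * ε))
          ≤ C₁ * Real.exp (-c₃ * (n : ℝ) ^ (2 * ε)) := hC₁bd n
      have hC₁c : C₁ ≤ c := by
        rw [hcdef]
        have := Real.exp_pos c₁
        linarith
      calc (∫ θ in Ωᶜ, f θ) / T ≤ 2 * n * Real.exp (-(t ^ 2 / b)) := hstep
        _ = (2 * n : ℝ) * Real.exp (-(2 * c₃) * (n : ℝ) ^ (2 * ε)) := by rw [hexp]
        _ ≤ C₁ * Real.exp (-c₃ * (n : ℝ) ^ (2 * ε)) := hfinal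
        _ ≤ c * Real.exp (-c₃ * (n : ℝ) ^ (2 * ε)) :=
            mul_le_mul_of_nonneg_right hC₁c (Real.exp_pos _).le
    · have heq : (1 + ((∫ θ in Ω, f θ) / T - 1)) * T = ∫ θ in Ω, f θ := by
        rw [add_sub_cancel, div_mul_cancel₀ _ hT.ne']
      exact heq.symm
  -- part (ii)
  · have hgcont : Continuous fun θ : Fin n → ℝ => Real.exp (-(θ ⬝ᵥ A.mulVec θ) + H θ) :=
      Real.continuous_exp.comp (hcontQ.neg.add hHc.continuous)
    have hgabs : |∫ θ in Ω, Real.exp (-(θ ⬝ᵥ A.mulVec θ) + H θ)|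
        = ∫ θ in Ω, Real.exp (-(θ ⬝ᵥ A.mulVec θ) + H θ) :=
      abs_of_nonneg (integral_nonneg fun θ => (Real.exp_pos _).le)
    rw [hgabs]
    by_cases hn : n < N₀
    · -- small n : crude bound
      have hKbd : ∀ θ ∈ Ω, Real.exp (-(θ ⬝ᵥ A.mulVec θ) + H θ) ≤ K * f θ := by
        intro θ hθ
        have hHb : H θ ≤ LK := by
          rcases Nat.eq_zero_or_pos n with h0 | h0
          · have hthis := hH1 θ
            have hcast : ((n : ℕ) : ℝ) = 0 := by rw [h0]; norm_num
            rw [hcast, div_zero] at hthis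
            linarith
          · have hn' : (0 : ℝ) < n := by exact_mod_cast h0
            have hr₂ : 0 < r₂ := hr₁.trans hr₁₂
            have hρ : 0 ≤ r₂ * (n : ℝ) ^ (ε : ℝ) :=
              mul_nonneg hr₂.le (Real.rpow_nonneg (Nat.cast_nonneg n) _)
            have hub := RegionAux.quad_upper ha.le hdiag hoff hρ
              (fun j => (hΩ₂ hθ) j)
            have h1 : H θ ≤ c₁ * (θ ⬝ᵥ A.mulVec θ) / n := hH1 θ
            have h2 : c₁ * (θ ⬝ᵥ A.mulVec θ) / n
                ≤ c₁ * ((1 + a) * n * (r₂ * (n : ℝ) ^ (ε : ℝ)) ^ 2) / n := by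
              have hmul := mul_le_mul_of_nonneg_left hub hc₁.le
              exact (div_le_div_iff_of_pos_right hn').2 hmul
            have hsq : ((n : ℝ) ^ (ε : ℝ)) ^ (2 : ℕ) = (n : ℝ) ^ (2 * ε) := by
              rw [← Real.rpow_natCast ((n : ℝ) ^ (ε : ℝ)) 2,
                ← Real.rpow_mul (Nat.cast_nonneg n)]
              norm_num [mul_comm]
            have h3 : c₁ * ((1 + a) * n * (r₂ * (n : ℝ) ^ (ε : ℝ)) ^ 2) / n
                = c₁ * (1 + a) * r₂ ^ 2 * (n : ℝ) ^ (2 * ε) := by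
              rw [mul_pow, hsq]
              field_simp
            have h4 : (n : ℝ) ^ (2 * ε) ≤ (N₀ : ℝ) ^ (2 * ε) := by
              apply Real.rpow_le_rpow (Nat.cast_nonneg n) ?_ (by positivity)
              exact_mod_cast hn.le
            have h5 : c₁ * (1 + a) * r₂ ^ 2 * (n : ℝ) ^ (2 * ε) ≤ LK := by
              rw [hLKdef]
              apply mul_le_mul_of_nonneg_left h4 (by positivity)
            linarith [h1, h2.trans_eq h3]
        rw [hKdef, hfdef, ← Real.exp_add]
        apply Real.exp_le_exp.2
        linarith
      have hgint : IntegrableOn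
          (fun θ : Fin n → ℝ => Real.exp (-(θ ⬝ᵥ A.mulVec θ) + H θ)) Ω := by
        refine ((hint.const_mul K).integrableOn).mono'
          (hgcont.aestronglyMeasurable.restrict) ?_
        refine ae_restrict_of_forall_mem hΩmeas fun θ hθ => ?_
        rw [Real.norm_eq_abs, abs_of_pos (Real.exp_pos _)]
        exact hKbd θ hθ
      calc ∫ θ in Ω, Real.exp (-(θ ⬝ᵥ A.mulVec θ) + H θ)
          ≤ ∫ θ in Ω, K * f θ :=
            setIntegral_mono_on hgint ((hint.const_mul K).integrableOn) hΩmeas hKbd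
        _ = K * ∫ θ in Ω, f θ := integral_const_mul K _
        _ ≤ K * T := mul_le_mul_of_nonneg_left
            (setIntegral_le_integral hint
              (Filter.Eventually.of_forall hf_nonneg)) (by linarith)
        _ ≤ c * T := by
            apply mul_le_mul_of_nonneg_right ?_ hT.le
            rw [hcdef]
            have := Real.exp_pos c₁
            linarith
    · -- large n : scaling bound
      push_neg at hn
      have hN₀c₁ : 2 * c₁ ≤ (N₀ : ℝ) := by
        rw [hN₀def]
        push_cast
        have := Nat.le_ceil (2 * c₁)
        linarith
      have hn1 : (1 : ℝ) ≤ n := by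
        have : 1 ≤ N₀ := by rw [hN₀def]; omega
        have h2 : (N₀ : ℝ) ≤ n := by exact_mod_cast hn
        have h3 : (1 : ℝ) ≤ N₀ := by exact_mod_cast this
        linarith
      have hnpos : (0 : ℝ) < n := by linarith
      have hy : 0 < c₁ / (n : ℝ) := by positivity
      have hy2 : c₁ / (n : ℝ) ≤ 1 / 2 := by
        rw [div_le_div_iff₀ hnpos (by norm_num)]
        have h2 : (N₀ : ℝ) ≤ n := by exact_mod_cast hn
        linarith
      set sc : ℝ := 1 - c₁ / (n : ℝ) with hscdef
      have hsc : 0 < sc := by rw [hscdef]; linarith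
      have hsint := RegionAux.integrable_sQ hm hQlow hcontQ hsc
      have hpt : ∀ θ : Fin n → ℝ,
          Real.exp (-(θ ⬝ᵥ A.mulVec θ) + H θ) ≤ Real.exp (-(sc * (θ ⬝ᵥ A.mulVec θ))) := by
        intro θ
        apply Real.exp_le_exp.2
        have h1 : H θ ≤ c₁ * (θ ⬝ᵥ A.mulVec θ) / n := hH1 θ
        have h2 : c₁ * (θ ⬝ᵥ A.mulVec θ) / n = (c₁ / n) * (θ ⬝ᵥ A.mulVec θ) := by ring
        rw [h2] at h1
        have h3 : -(sc * (θ ⬝ᵥ A.mulVec θ))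
            = -(θ ⬝ᵥ A.mulVec θ) + (c₁ / n) * (θ ⬝ᵥ A.mulVec θ) := by
          rw [hscdef]; ring
        rw [h3]
        linarith
      have hgint : IntegrableOn
          (fun θ : Fin n → ℝ => Real.exp (-(θ ⬝ᵥ A.mulVec θ) + H θ)) Ω := by
        refine (hsint.integrableOn).mono' (hgcont.aestronglyMeasurable.restrict) ?_
        refine Filter.Eventually.of_forall fun θ => ?_
        rw [Real.norm_eq_abs, abs_of_pos (Real.exp_pos _)]
        exact hpt θ
      have hscale := RegionAux.scale_identity A hsc
      have hsqrtbd : ((Real.sqrt sc) ^ n)⁻¹ ≤ Real.exp c₁ := by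
        rw [hscdef]
        exact RegionAux.inv_sqrt_pow_le hc₁ hn1 hy2
      calc ∫ θ in Ω, Real.exp (-(θ ⬝ᵥ A.mulVec θ) + H θ)
          ≤ ∫ θ in Ω, Real.exp (-(sc * (θ ⬝ᵥ A.mulVec θ))) :=
            setIntegral_mono_on hgint hsint.integrableOn hΩmeas fun θ _ => hpt θ
        _ ≤ ∫ θ : Fin n → ℝ, Real.exp (-(sc * (θ ⬝ᵥ A.mulVec θ))) :=
            setIntegral_le_integral hsint
              (Filter.Eventually.of_forall fun θ => (Real.exp_pos _).le)
        _ = ((Real.sqrt sc) ^ n)⁻¹ * T := hscale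
        _ ≤ Real.exp c₁ * T := mul_le_mul_of_nonneg_right hsqrtbd hT.le
        _ ≤ c * T := by
            apply mul_le_mul_of_nonneg_right ?_ hT.le
            rw [hcdef]
            linarith [hK1, hC₁]
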